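/- Let n,m ≥ 1 and 1 ≤ a ≤ n, 1 ≤ b ≤ m. The minimum cardinality of a set A ⊆ [0,n-1]×[0,m-1] such that every point (j,i) ∉ A has at least a points of A in its row or at least b points of A in its column equals min over b ≤ x ≤ m and a ≤ y ≤ n of ( (m−x)(n−y) + max(ax, by) ). -/

import Mathlib

open Finset

lemma exists_core (a b x y : ℕ) (ha : 1 ≤ a) (hay : a ≤ y) (hb : 1 ≤ b)
    (hba : b * y ≤ a * x) :
    ∃ B : Finset (ℕ × ℕ), B ⊆ range y ×ˢ range x ∧ B.card = a * x ∧
      (∀ i < x, a ≤ (B.filter (fun q => q.2 = i)).card) ∧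
      (∀ j < y, b ≤ (B.filter (fun q => q.1 = j)).card) := by
  have hy0 : 0 < y := ha.trans hay
  have ha0 : 0 < a := ha
  set f : ℕ → ℕ × ℕ := fun t => (t % y, t / a) with hf
  -- injectivity
  have hinj : ∀ t s : ℕ, f t = f s → t = s := by
    have key : ∀ t s : ℕ, t ≤ s → f t = f s → t = s := by
      intro t s hts hfe
      have hmod : t % y = s % y := congrArg Prod.fst hfe
      have hdiv : t / a = s / a := congrArg Prod.snd hfe
      have hlt : s - t < a := by
        have e1 := Nat.div_add_mod t a
        have e2 := Nat.div_add_mod s a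
        rw [hdiv] at e1
        obtain ⟨P, hP⟩ : ∃ P, a * (s / a) = P := ⟨_, rfl⟩
        rw [hP] at e1 e2
        have m1 : t % a < a := Nat.mod_lt _ ha0
        have m2 : s % a < a := Nat.mod_lt _ ha0
        omega
      have hdvd : y ∣ s - t := (Nat.modEq_iff_dvd' hts).mp hmod
      have : s - t = 0 := Nat.eq_zero_of_dvd_of_lt hdvd (lt_of_lt_of_le hlt hay)
      omega
    intro t s hfe
    rcases le_total t s with h | h
    · exact key t s h hfe
    · exact (key s t h hfe.symm).symm
  have hInj : Function.Injective f := fun t s h => hinj t s h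
  refine ⟨(range (a * x)).image f, ?_, ?_, ?_, ?_⟩
  · intro q hq
    simp only [mem_image, mem_range] at hq
    obtain ⟨t, ht, rfl⟩ := hq
    simp only [mem_product, mem_range, hf]
    exact ⟨Nat.mod_lt _ hy0, (Nat.div_lt_iff_lt_mul ha0).mpr (by rwa [mul_comm])⟩
  · rw [card_image_of_injective _ hInj, card_range]
  · -- columns
    intro i hi
    have hsub : (Ico (a * i) (a * i + a)).image f ⊆
        ((range (a * x)).image f).filter (fun q => q.2 = i) := by
      intro q hq
      simp only [mem_image, mem_Ico] at hq
      obtain ⟨t, ht, rfl⟩ := hq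
      have htx : t < a * x := by
        have : a * i + a = a * (i + 1) := by ring
        have h2 : a * (i + 1) ≤ a * x := Nat.mul_le_mul_left a hi
        omega
      have hdiv : t / a = i := by
        have h1 : i ≤ t / a := (Nat.le_div_iff_mul_le ha0).mpr (by rw [mul_comm]; omega)
        have h2 : t / a < i + 1 := (Nat.div_lt_iff_lt_mul ha0).mpr (by
          have : (i + 1) * a = a * i + a := by ring
          omega)
        omega
      simp only [mem_filter, mem_image, mem_range]
      exact ⟨⟨t, htx, rfl⟩, hdiv⟩
    calc a = ((Ico (a * i) (a * i + a)).image f).card := by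
              rw [card_image_of_injective _ hInj, Nat.card_Ico]; omega
      _ ≤ _ := card_le_card hsub
  · -- rows
    intro j hj
    set c := a * x / y with hc
    have hbc : b ≤ c := (Nat.le_div_iff_mul_le hy0).mpr hba
    have hcy : c * y ≤ a * x := Nat.div_mul_le_self _ _
    have hmem : ∀ k, k < c → j + k * y < a * x := by
      intro k hk
      have h1 : j + k * y < (k + 1) * y := by
        have : (k + 1) * y = k * y + y := by ring
        omega
      have h2 : (k + 1) * y ≤ c * y := Nat.mul_le_mul_right y hk
      omega
    have hsub : (range c).image (fun k => f (j + k * y)) ⊆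
        ((range (a * x)).image f).filter (fun q => q.1 = j) := by
      intro q hq
      simp only [mem_image, mem_range] at hq
      obtain ⟨k, hk, rfl⟩ := hq
      simp only [mem_filter, mem_image, mem_range, hf]
      exact ⟨⟨j + k * y, hmem k hk, rfl⟩, by
        show (j + k * y) % y = j
        rw [Nat.add_mul_mod_self_right, Nat.mod_eq_of_lt hj]⟩
    have hinj2 : ∀ k ∈ range c, ∀ l ∈ range c,
        f (j + k * y) = f (j + l * y) → k = l := by
      intro k _ l _ he
      have := hinj _ _ he
      have hy0' : 0 < y := hy0
      nlinarith [Nat.le_of_eq this, Nat.le_of_eq this.symm]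
    calc b ≤ c := hbc
      _ = ((range c).image (fun k => f (j + k * y))).card := by
            rw [card_image_of_injOn ?_, card_range]
            intro k hk l hl he
            exact hinj2 k hk l hl he
      _ ≤ _ := card_le_card hsub

lemma exists_core_max (a b x y : ℕ) (ha : 1 ≤ a) (hay : a ≤ y) (hb : 1 ≤ b) (hbx : b ≤ x) :
    ∃ B : Finset (ℕ × ℕ), B ⊆ range y ×ˢ range x ∧ B.card = max (a * x) (b * y) ∧
      (∀ i < x, a ≤ (B.filter (fun q => q.2 = i)).card) ∧
      (∀ j < y, b ≤ (B.filter (fun q => q.1 = j)).card) := by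
  rcases le_total (b * y) (a * x) with h | h
  · obtain ⟨B, h1, h2, h3, h4⟩ := exists_core a b x y ha hay hb h
    exact ⟨B, h1, by rw [max_eq_left h]; exact h2, h3, h4⟩
  · obtain ⟨B, h1, h2, h3, h4⟩ := exists_core b a y x hb hbx ha h
    refine ⟨B.image Prod.swap, ?_, ?_, ?_, ?_⟩
    · intro q hq
      simp only [mem_image] at hq
      obtain ⟨r, hr, rfl⟩ := hq
      have := h1 hr
      simp only [mem_product, mem_range] at this ⊢
      exact ⟨this.2, this.1⟩
    · rw [card_image_of_injective _ Prod.swap_injective, h2, max_eq_right h]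
    · intro i hi
      have key : (B.image Prod.swap).filter (fun q => q.2 = i) =
          (B.filter (fun q => q.1 = i)).image Prod.swap := by
        ext q
        simp only [mem_filter, mem_image]
        constructor
        · rintro ⟨⟨r, hr, rfl⟩, h2'⟩
          exact ⟨r, ⟨hr, h2'⟩, rfl⟩
        · rintro ⟨r, ⟨hr, h2'⟩, rfl⟩
          exact ⟨⟨r, hr, rfl⟩, h2'⟩
      rw [key, card_image_of_injective _ Prod.swap_injective]
      exact h4 i hi
    · intro j hj
      have key : (B.image Prod.swap).filter (fun q => q.1 = j) =
          (B.filter (fun q => q.2 = j)).image Prod.swap := by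
        ext q
        simp only [mem_filter, mem_image]
        constructor
        · rintro ⟨⟨r, hr, rfl⟩, h2'⟩
          exact ⟨r, ⟨hr, h2'⟩, rfl⟩
        · rintro ⟨r, ⟨hr, h2'⟩, rfl⟩
          exact ⟨⟨r, hr, rfl⟩, h2'⟩
      rw [key, card_image_of_injective _ Prod.swap_injective]
      exact h3 j hj

lemma construct (n m a b x y : ℕ) (ha : 1 ≤ a) (hb : 1 ≤ b)
    (hbx : b ≤ x) (hxm : x ≤ m) (hay : a ≤ y) (hyn : y ≤ n) :
    ∃ A : Finset (ℕ × ℕ), A ⊆ Finset.range n ×ˢ Finset.range m ∧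
      A.card = (m - x) * (n - y) + max (a * x) (b * y) ∧
      ∀ p ∈ Finset.range n ×ˢ Finset.range m, p ∉ A →
        a ≤ (A.filter (fun q => q.2 = p.2 ∧ q.1 ≠ p.1)).card ∨
        b ≤ (A.filter (fun q => q.1 = p.1 ∧ q.2 ≠ p.2)).card := by
  obtain ⟨B, hB1, hB2, hB3, hB4⟩ := exists_core_max a b x y ha hay hb hbx
  set A := (Ico y n ×ˢ Ico x m) ∪ B with hA
  have hBsub : ∀ q ∈ B, q.1 < y ∧ q.2 < x := by
    intro q hq
    have := hB1 hq
    simp only [mem_product, mem_range] at this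
    exact this
  have hdisj : Disjoint (Ico y n ×ˢ Ico x m) B := by
    rw [disjoint_left]
    intro q hq hq'
    simp only [mem_product, mem_Ico] at hq
    exact absurd (hBsub q hq').1 (by omega)
  refine ⟨A, ?_, ?_, ?_⟩
  · intro q hq
    rw [hA, mem_union] at hq
    simp only [mem_product, mem_range]
    rcases hq with h | h
    · simp only [mem_product, mem_Ico] at h
      exact ⟨h.1.2, h.2.2⟩
    · exact ⟨(hBsub q h).1.trans_le hyn, (hBsub q h).2.trans_le hxm⟩
  · rw [hA, card_union_of_disjoint hdisj, card_product, Nat.card_Ico, Nat.card_Ico, hB2,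
      mul_comm]
  · rintro ⟨j, i⟩ hp hpA
    simp only [mem_product, mem_range] at hp
    have hnb : ¬ (y ≤ j ∧ x ≤ i) := by
      intro h
      exact hpA (by rw [hA, mem_union]; exact Or.inl (by
        simp only [mem_product, mem_Ico]; exact ⟨⟨h.1, hp.1⟩, ⟨h.2, hp.2⟩⟩))
    rcases Nat.lt_or_ge i x with hix | hix
    · left
      have hsub : B.filter (fun q => q.2 = i) ⊆
          A.filter (fun q => q.2 = (j, i).2 ∧ q.1 ≠ (j, i).1) := by
        intro q hq
        rw [mem_filter] at hq ⊢
        refine ⟨by rw [hA, mem_union]; exact Or.inr hq.1, hq.2, ?_⟩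
        intro hq1
        apply hpA
        have : q = (j, i) := Prod.ext hq1 hq.2
        rw [hA, mem_union]
        exact Or.inr (this ▸ hq.1)
      exact le_trans (hB3 i hix) (card_le_card hsub)
    · right
      have hjy : j < y := by omega
      have hsub : B.filter (fun q => q.1 = j) ⊆
          A.filter (fun q => q.1 = (j, i).1 ∧ q.2 ≠ (j, i).2) := by
        intro q hq
        rw [mem_filter] at hq ⊢
        refine ⟨by rw [hA, mem_union]; exact Or.inr hq.1, hq.2, ?_⟩
        intro hq2
        apply hpA
        have : q = (j, i) := Prod.ext hq.2 hq2
        rw [hA, mem_union]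
        exact Or.inr (this ▸ hq.1)
      exact le_trans (hB4 j hjy) (card_le_card hsub)

lemma arith (n m a b x' y' : ℕ) (han : a ≤ n) (hbm : b ≤ m) (hx : x' ≤ m) (hy : y' ≤ n) :
    (m - max x' b) * (n - max y' a) + max (a * max x' b) (b * max y' a) ≤
    (m - x') * (n - y') + max (a * x') (max (b * y') (a * x' + b * y' - x' * y')) := by
  rcases Nat.lt_or_ge x' b with hxb | hxb <;> rcases Nat.lt_or_ge y' a with hya | hya
  · -- x' < b, y' < a : use third term
    rw [max_eq_right hxb.le, max_eq_right hya.le]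
    have key : (m - b) * (n - a) + a * b + x' * y' ≤ (m - x') * (n - y') + (a * x' + b * y') := by
      obtain ⟨M, hM⟩ : ∃ M, m = b + M := ⟨m - b, by omega⟩
      obtain ⟨N, hN⟩ : ∃ N, n = a + N := ⟨n - a, by omega⟩
      obtain ⟨u, hu⟩ : ∃ u, b = x' + u + 1 := ⟨b - x' - 1, by omega⟩
      obtain ⟨v, hv⟩ : ∃ v, a = y' + v + 1 := ⟨a - y' - 1, by omega⟩
      subst hM hN hu hv
      have e1 : x' + u + 1 + M - (x' + u + 1) = M := by omega
      have e2 : y' + v + 1 + N - (y' + v + 1) = N := by omega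
      have e3 : x' + u + 1 + M - x' = M + u + 1 := by omega
      have e4 : y' + v + 1 + N - y' = N + v + 1 := by omega
      rw [e1, e2, e3, e4]
      nlinarith
    have hmax2 : max (a * b) (b * a) = a * b := by rw [mul_comm b a, max_self]
    rw [hmax2]
    have h3 : a * x' + b * y' - x' * y' ≤
        max (a * x') (max (b * y') (a * x' + b * y' - x' * y')) :=
      le_trans (le_max_right _ _) (le_max_right _ _)
    omega
  · -- x' < b, a ≤ y'
    rw [max_eq_right hxb.le, max_eq_left hya]
    have h1 : max (a * b) (b * y') = b * y' := by
      rw [max_eq_right]; calc a * b ≤ y' * b := Nat.mul_le_mul_right b hya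
        _ = b * y' := mul_comm _ _
    rw [h1]
    have h2 : (m - b) * (n - y') ≤ (m - x') * (n - y') :=
      Nat.mul_le_mul_right _ (Nat.sub_le_sub_left hxb.le m)
    calc (m - b) * (n - y') + b * y' ≤ (m - x') * (n - y') + b * y' := by omega
      _ ≤ _ := by
          have : b * y' ≤ max (a * x') (max (b * y') (a * x' + b * y' - x' * y')) :=
            le_trans (le_max_left _ _) (le_max_right _ _)
          omega
  · -- b ≤ x', y' < a
    rw [max_eq_left hxb, max_eq_right hya.le]
    have h1 : max (a * x') (b * a) = a * x' := by
      rw [max_eq_left]; calc b * a ≤ x' * a := Nat.mul_le_mul_right a hxb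
        _ = a * x' := mul_comm _ _
    rw [h1]
    have h2 : (m - x') * (n - a) ≤ (m - x') * (n - y') :=
      Nat.mul_le_mul_left _ (Nat.sub_le_sub_left hya.le n)
    have h3 : a * x' ≤ max (a * x') (max (b * y') (a * x' + b * y' - x' * y')) := le_max_left _ _
    omega
  · -- b ≤ x', a ≤ y'
    rw [max_eq_left hxb, max_eq_left hya]
    have : max (a * x') (b * y') ≤ max (a * x') (max (b * y') (a * x' + b * y' - x' * y')) :=
      max_le (le_max_left _ _) (le_trans (le_max_left _ _) (le_max_right _ _))
    omega

lemma lower_bound (n m a b : ℕ) (A : Finset (ℕ × ℕ))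
    (hAsub : A ⊆ Finset.range n ×ˢ Finset.range m)
    (hval : ∀ p ∈ Finset.range n ×ˢ Finset.range m, p ∉ A →
        a ≤ (A.filter (fun q => q.2 = p.2 ∧ q.1 ≠ p.1)).card ∨
        b ≤ (A.filter (fun q => q.1 = p.1 ∧ q.2 ≠ p.2)).card) :
    ∃ x' y', x' ≤ m ∧ y' ≤ n ∧
      (m - x') * (n - y') + max (a * x') (max (b * y') (a * x' + b * y' - x' * y')) ≤ A.card := by
  set X := (range m).filter (fun i => a ≤ (A.filter (fun q => q.2 = i)).card) with hX
  set Y := (range n).filter (fun j => b ≤ (A.filter (fun q => q.1 = j)).card) with hY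
  refine ⟨X.card, Y.card, (card_filter_le _ _).trans_eq (card_range m),
    (card_filter_le _ _).trans_eq (card_range n), ?_⟩
  -- block
  have hblock : (range n \ Y) ×ˢ (range m \ X) ⊆ A := by
    rintro ⟨j, i⟩ hp
    simp only [mem_product, mem_sdiff] at hp
    by_contra hpA
    rcases hval (j, i) (by simp only [mem_product]; exact ⟨hp.1.1, hp.2.1⟩) hpA
      with h | h
    · exact hp.2.2 (by
        rw [hX, mem_filter]
        refine ⟨hp.2.1, le_trans h (card_le_card ?_)⟩
        intro q hq
        rw [mem_filter] at hq ⊢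
        exact ⟨hq.1, hq.2.1⟩)
    · exact hp.1.2 (by
        rw [hY, mem_filter]
        refine ⟨hp.1.1, le_trans h (card_le_card ?_)⟩
        intro q hq
        rw [mem_filter] at hq ⊢
        exact ⟨hq.1, hq.2.1⟩)
  set U := A.filter (fun q => q.2 ∈ X) with hU
  set V := A.filter (fun q => q.1 ∈ Y) with hV
  have hUcard : a * X.card ≤ U.card := by
    have hrw : U = X.biUnion (fun i => A.filter (fun q => q.2 = i)) := by
      ext q
      simp only [hU, mem_filter, mem_biUnion]
      constructor
      · rintro ⟨h1, h2⟩; exact ⟨q.2, h2, h1, rfl⟩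
      · rintro ⟨i, hi, h1, rfl⟩; exact ⟨h1, hi⟩
    rw [hrw, card_biUnion]
    · calc a * X.card = X.card • a := by rw [smul_eq_mul, mul_comm]
        _ ≤ ∑ i ∈ X, (A.filter (fun q => q.2 = i)).card := by
            apply card_nsmul_le_sum
            intro i hi
            rw [hX, mem_filter] at hi
            exact hi.2
    · intro i _ i' _ hne
      simp only [Function.onFun]
      rw [disjoint_left]
      intro q hq hq'
      rw [mem_filter] at hq hq'
      exact hne (hq.2 ▸ hq'.2.symm ▸ rfl)
  have hVcard : b * Y.card ≤ V.card := by
    have hrw : V = Y.biUnion (fun j => A.filter (fun q => q.1 = j)) := by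
      ext q
      simp only [hV, mem_filter, mem_biUnion]
      constructor
      · rintro ⟨h1, h2⟩; exact ⟨q.1, h2, h1, rfl⟩
      · rintro ⟨j, hj, h1, rfl⟩; exact ⟨h1, hj⟩
    rw [hrw, card_biUnion]
    · calc b * Y.card = Y.card • b := by rw [smul_eq_mul, mul_comm]
        _ ≤ ∑ j ∈ Y, (A.filter (fun q => q.1 = j)).card := by
            apply card_nsmul_le_sum
            intro j hj
            rw [hY, mem_filter] at hj
            exact hj.2
    · intro j _ j' _ hne
      simp only [Function.onFun]
      rw [disjoint_left]
      intro q hq hq'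
      rw [mem_filter] at hq hq'
      exact hne (hq.2 ▸ hq'.2.symm ▸ rfl)
  have hInter : (U ∩ V).card ≤ Y.card * X.card := by
    calc (U ∩ V).card ≤ (Y ×ˢ X).card := by
          apply card_le_card
          intro q hq
          simp only [hU, hV, mem_inter, mem_filter] at hq
          rw [mem_product]
          exact ⟨hq.2.2, hq.1.2⟩
      _ = Y.card * X.card := card_product _ _
  have hUV : (U ∪ V).card + (U ∩ V).card = U.card + V.card := card_union_add_card_inter U V
  have hblockcard : ((range n \ Y) ×ˢ (range m \ X)).card = (n - Y.card) * (m - X.card) := by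
    rw [card_product, card_sdiff_of_subset (filter_subset _ _), card_sdiff_of_subset (filter_subset _ _),
      card_range, card_range]
  have hdisj : Disjoint ((range n \ Y) ×ˢ (range m \ X)) (U ∪ V) := by
    rw [disjoint_left]
    intro q hq hq'
    simp only [mem_product, mem_sdiff] at hq
    rcases mem_union.mp hq' with h | h
    · rw [hU, mem_filter] at h; exact hq.2.2 h.2
    · rw [hV, mem_filter] at h; exact hq.1.2 h.2
  have hsubA : (range n \ Y) ×ˢ (range m \ X) ∪ (U ∪ V) ⊆ A := by
    apply union_subset hblock
    apply union_subset (filter_subset _ _) (filter_subset _ _)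
  have hbig : (n - Y.card) * (m - X.card) + (U ∪ V).card ≤ A.card := by
    calc (n - Y.card) * (m - X.card) + (U ∪ V).card
        = ((range n \ Y) ×ˢ (range m \ X) ∪ (U ∪ V)).card := by
          rw [card_union_of_disjoint hdisj, hblockcard]
      _ ≤ A.card := card_le_card hsubA
  have hUle : U.card ≤ (U ∪ V).card := card_le_card subset_union_left
  have hVle : V.card ≤ (U ∪ V).card := card_le_card subset_union_right
  have hcomm : (m - X.card) * (n - Y.card) = (n - Y.card) * (m - X.card) := mul_comm _ _
  rw [hcomm]
  have h1 : a * X.card ≤ (U ∪ V).card := hUcard.trans hUle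
  have h2 : b * Y.card ≤ (U ∪ V).card := hVcard.trans hVle
  have h3 : a * X.card + b * Y.card - X.card * Y.card ≤ (U ∪ V).card := by
    have : X.card * Y.card = Y.card * X.card := mul_comm _ _
    omega
  have : max (a * X.card) (max (b * Y.card)
      (a * X.card + b * Y.card - X.card * Y.card)) ≤ (U ∪ V).card := by
    exact max_le h1 (max_le h2 h3)
  omega

/-- the Young domination number for the rectangular zero-set `R_{a,b}`:
the minimum size of `A ⊆ [0,n-1]×[0,m-1]` such that every point `(j,i) ∉ A` has at
least `a` points of `A` in its row or at least `b` points of `A` in its column equals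
`min_{b ≤ x ≤ m, a ≤ y ≤ n} ((m−x)(n−y) + max(ax, by))`. -/
theorem stmt_5 (n m a b : ℕ) (ha : 1 ≤ a) (han : a ≤ n) (hb : 1 ≤ b) (hbm : b ≤ m) :
    sInf {k : ℕ | ∃ A : Finset (ℕ × ℕ), A ⊆ Finset.range n ×ˢ Finset.range m ∧
      A.card = k ∧
      ∀ p ∈ Finset.range n ×ˢ Finset.range m, p ∉ A →
        a ≤ (A.filter (fun q => q.2 = p.2 ∧ q.1 ≠ p.1)).card ∨
        b ≤ (A.filter (fun q => q.1 = p.1 ∧ q.2 ≠ p.2)).card} =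
    sInf {v : ℕ | ∃ x y : ℕ, b ≤ x ∧ x ≤ m ∧ a ≤ y ∧ y ≤ n ∧
      v = (m - x) * (n - y) + max (a * x) (b * y)} := by
  have hTne : {v : ℕ | ∃ x y : ℕ, b ≤ x ∧ x ≤ m ∧ a ≤ y ∧ y ≤ n ∧
      v = (m - x) * (n - y) + max (a * x) (b * y)}.Nonempty :=
    ⟨(m - b) * (n - a) + max (a * b) (b * a), b, a, le_refl b, hbm, le_refl a, han, rfl⟩
  have hSne : {k : ℕ | ∃ A : Finset (ℕ × ℕ), A ⊆ Finset.range n ×ˢ Finset.range m ∧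
      A.card = k ∧
      ∀ p ∈ Finset.range n ×ˢ Finset.range m, p ∉ A →
        a ≤ (A.filter (fun q => q.2 = p.2 ∧ q.1 ≠ p.1)).card ∨
        b ≤ (A.filter (fun q => q.1 = p.1 ∧ q.2 ≠ p.2)).card}.Nonempty :=
    ⟨(Finset.range n ×ˢ Finset.range m).card, Finset.range n ×ˢ Finset.range m,
      Finset.Subset.refl _, rfl, fun p hp hpA => absurd hp hpA⟩
  apply le_antisymm
  · obtain ⟨x, y, hbx, hxm, hay, hyn, hv⟩ := Nat.sInf_mem hTne
    obtain ⟨A, hA1, hA2, hA3⟩ := construct n m a b x y ha hb hbx hxm hay hyn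
    rw [hv]
    exact Nat.sInf_le ⟨A, hA1, hA2, hA3⟩
  · obtain ⟨A, hA1, hA2, hA3⟩ := Nat.sInf_mem hSne
    obtain ⟨x', y', hx, hy, hle⟩ := lower_bound n m a b A hA1 hA3
    have hmem : (m - max x' b) * (n - max y' a) + max (a * max x' b) (b * max y' a) ∈
        {v : ℕ | ∃ x y : ℕ, b ≤ x ∧ x ≤ m ∧ a ≤ y ∧ y ≤ n ∧
          v = (m - x) * (n - y) + max (a * x) (b * y)} :=
      ⟨max x' b, max y' a, le_max_right _ _, max_le hx hbm, le_max_right _ _,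
        max_le hy han, rfl⟩
    calc sInf _ ≤ (m - max x' b) * (n - max y' a) + max (a * max x' b) (b * max y' a) :=
          Nat.sInf_le hmem
      _ ≤ (m - x') * (n - y') + max (a * x') (max (b * y') (a * x' + b * y' - x' * y')) :=
          arith n m a b x' y' han hbm hx hy
      _ ≤ A.card := hle
      _ = _ := hA2
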